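/- Let v = [[1,2],[2,3]] ∈ GL₂(ℤ/4ℤ). Then: (i) {I, -I, v, -v} is a normal subgroup of GL₂(ℤ/4ℤ); (ii) for every unit r ∈ (ℤ/8ℤ)* there exists A ∈ GL₂(ℤ/8ℤ) with det A = r whose reduction modulo 4 lies in {I, -I, v, -v}; (iii) every A ∈ GL₂(ℤ/8ℤ) with det A = 1 whose reduction modulo 4 lies in {I, -I, v, -v} satisfies A ≡ I or A ≡ -I modulo 4. -/
import Mathlib

namespace Stmt12Aux

abbrev π2 : ZMod 4 →+* ZMod 2 := ZMod.castHom (show (2:ℕ) ∣ 4 by norm_num) (ZMod 2)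

abbrev M4 := Matrix (Fin 2) (Fin 2) (ZMod 4)

lemma conj2 : ∀ a b : Matrix (Fin 2) (Fin 2) (ZMod 2), a * b = 1 →
    a * !![0,1;1,1] * b = !![0,1;1,1] ∨ a * !![0,1;1,1] * b = !![1,1;1,0] := by decide

lemma two_smul_eq (a b : M4) (h : a.map π2 = b.map π2) :
    (2 : ZMod 4) • a = (2 : ZMod 4) • b := by
  have key : ∀ x y : ZMod 4, π2 x = π2 y → (2 : ZMod 4) * x = 2 * y := by decide
  ext i j
  simpa [Matrix.smul_apply] using key _ _ (congrFun (congrFun h i) j)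

lemma hgg (g : GL (Fin 2) (ZMod 4)) : ((g : M4) * ((g⁻¹ : GL (Fin 2) (ZMod 4)) : M4)) = 1 := by
  rw [← Units.val_mul, mul_inv_cancel, Units.val_one]

lemma conj4 (g : GL (Fin 2) (ZMod 4)) (w : M4)
    (hw : w = !![0,1;1,1] ∨ w = !![1,1;1,0]) :
    ((g : M4) * (1 + (2 : ZMod 4) • w) * ((g⁻¹ : GL (Fin 2) (ZMod 4)) : M4))
      = 1 + (2 : ZMod 4) • !![0,1;1,1] ∨
    ((g : M4) * (1 + (2 : ZMod 4) • w) * ((g⁻¹ : GL (Fin 2) (ZMod 4)) : M4))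
      = 1 + (2 : ZMod 4) • !![1,1;1,0] := by
  have hexp : ((g : M4) * (1 + (2 : ZMod 4) • w) * ((g⁻¹ : GL (Fin 2) (ZMod 4)) : M4))
      = 1 + (2 : ZMod 4) • ((g : M4) * w * ((g⁻¹ : GL (Fin 2) (ZMod 4)) : M4)) := by
    rw [mul_add, add_mul, mul_one, hgg g, Matrix.mul_smul, Matrix.smul_mul]
  set C : M4 := (g : M4) * w * ((g⁻¹ : GL (Fin 2) (ZMod 4)) : M4) with hC
  have hab : ((g : M4).map π2) * (((g⁻¹ : GL (Fin 2) (ZMod 4)) : M4).map π2) = 1 := by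
    rw [← Matrix.map_mul, hgg g, Matrix.map_one π2 (map_zero π2) (map_one π2)]
  have hCmap : C.map π2 = ((g : M4).map π2) * (w.map π2) *
      (((g⁻¹ : GL (Fin 2) (ZMod 4)) : M4).map π2) := by
    rw [hC, Matrix.map_mul, Matrix.map_mul]
  set a := (g : M4).map π2
  set b := ((g⁻¹ : GL (Fin 2) (ZMod 4)) : M4).map π2
  have key : C.map π2 = !![0,1;1,1] ∨ C.map π2 = !![1,1;1,0] := by
    rcases hw with rfl | rfl
    · have hwmap : (!![0,1;1,1] : M4).map π2 = !![0,1;1,1] := by decide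
      rw [hCmap, hwmap]; exact conj2 a b hab
    · have hwmap : (!![1,1;1,0] : M4).map π2 = !![1,1;1,0] := by decide
      have h1 : (!![1,1;1,0] : Matrix (Fin 2) (Fin 2) (ZMod 2)) = !![0,1;1,1] + 1 := by decide
      have h2 : a * (!![0,1;1,1] + 1) * b = a * !![0,1;1,1] * b + a * b := by
        rw [mul_add, mul_one, add_mul]
      rw [hCmap, hwmap, h1, h2, hab]
      rcases conj2 a b hab with h | h <;> rw [h]
      · right; decide
      · left; decide
  rcases key with h | h
  · left
    rw [hexp]
    congr 1
    exact two_smul_eq _ _ (by rw [h]; decide)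
  · right
    rw [hexp]
    congr 1
    exact two_smul_eq _ _ (by rw [h]; decide)

lemma vconj (g : GL (Fin 2) (ZMod 4)) (m : M4)
    (hm : m = !![1,2;2,3] ∨ m = -!![1,2;2,3]) :
    ((g : M4) * m * ((g⁻¹ : GL (Fin 2) (ZMod 4)) : M4)) = !![1,2;2,3] ∨
    ((g : M4) * m * ((g⁻¹ : GL (Fin 2) (ZMod 4)) : M4)) = -!![1,2;2,3] := by
  have e1 : (!![1,2;2,3] : M4) = 1 + (2 : ZMod 4) • !![0,1;1,1] := by decide
  have e2 : (-!![1,2;2,3] : M4) = 1 + (2 : ZMod 4) • !![1,1;1,0] := by decide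
  rcases hm with rfl | rfl
  · have := conj4 g !![0,1;1,1] (Or.inl rfl)
    rw [← e1, ← e2] at this
    exact this
  · have := conj4 g !![1,1;1,0] (Or.inr rfl)
    rw [← e1, ← e2] at this
    exact this

def S : Subgroup (GL (Fin 2) (ZMod 4)) where
  carrier := {A | (A : M4) ∈ ({1, -1, !![1,2;2,3], -!![1,2;2,3]} : Set M4)}
  one_mem' := by
    simp only [Set.mem_setOf_eq, Set.mem_insert_iff, Set.mem_singleton_iff, Units.val_one]
    tauto
  mul_mem' := by
    intro A B hA hB
    simp only [Set.mem_setOf_eq, Set.mem_insert_iff, Set.mem_singleton_iff, Units.val_mul]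
      at hA hB ⊢
    rcases hA with h | h | h | h <;> rcases hB with h' | h' | h' | h' <;> rw [h, h'] <;> decide
  inv_mem' := by
    intro A hA
    simp only [Set.mem_setOf_eq, Set.mem_insert_iff, Set.mem_singleton_iff] at hA ⊢
    have hsq : A * A = 1 := by
      ext : 1
      rw [Units.val_mul, Units.val_one]
      rcases hA with h | h | h | h <;> rw [h] <;> decide
    have hinv : A⁻¹ = A := inv_eq_of_mul_eq_one_right hsq
    rw [hinv]; exact hA

lemma Snormal : S.Normal := by
  constructor
  intro A hA g
  have hA' : (A : M4) ∈ ({1, -1, !![1,2;2,3], -!![1,2;2,3]} : Set M4) := hA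
  show ((g * A * g⁻¹ : GL (Fin 2) (ZMod 4)) : M4) ∈
      ({1, -1, !![1,2;2,3], -!![1,2;2,3]} : Set M4)
  rw [Units.val_mul, Units.val_mul]
  simp only [Set.mem_insert_iff, Set.mem_singleton_iff] at hA' ⊢
  rcases hA' with h | h | h | h
  · left; rw [h, mul_one, hgg g]
  · right; left
    rw [h]
    rw [mul_neg_one, neg_mul, hgg g]
  · have := vconj g _ (Or.inl h)
    rcases this with h' | h'
    · right; right; left; exact h'
    · right; right; right; exact h'
  · have := vconj g _ (Or.inr h)
    rcases this with h' | h'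
    · right; right; left; exact h'
    · right; right; right; exact h'

end Stmt12Aux

open Stmt12Aux in
/-- Section 5 of the paper, exactness of `1 → H → H' → (ℤ/8ℤ)* → 1`:
(i) `{±I, ±v}` is a normal subgroup of `GL₂(ℤ/4ℤ)`;
(ii) every unit of `ℤ/8ℤ` is the determinant of some matrix in `GL₂(ℤ/8ℤ)`
whose reduction mod 4 lies in `{±I, ±v}`;
(iii) a determinant-one matrix in `GL₂(ℤ/8ℤ)` whose reduction mod 4 lies in
`{±I, ±v}` reduces to `±I` mod 4. -/
theorem stmt_12 (v : Matrix (Fin 2) (Fin 2) (ZMod 4)) (hv : v = !![1, 2; 2, 3]) :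
    (∃ S : Subgroup (GL (Fin 2) (ZMod 4)), S.Normal ∧
      ∀ A : GL (Fin 2) (ZMod 4), A ∈ S ↔
        (A : Matrix (Fin 2) (Fin 2) (ZMod 4)) ∈
          ({1, -1, v, -v} : Set (Matrix (Fin 2) (Fin 2) (ZMod 4)))) ∧
    (∀ r : (ZMod 8)ˣ, ∃ A : GL (Fin 2) (ZMod 8),
      (A : Matrix (Fin 2) (Fin 2) (ZMod 8)).det = (r : ZMod 8) ∧
      (A : Matrix (Fin 2) (Fin 2) (ZMod 8)).map
          (ZMod.castHom (show (4:ℕ) ∣ 8 by norm_num) (ZMod 4)) ∈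
        ({1, -1, v, -v} : Set (Matrix (Fin 2) (Fin 2) (ZMod 4)))) ∧
    (∀ A : GL (Fin 2) (ZMod 8),
      (A : Matrix (Fin 2) (Fin 2) (ZMod 8)).det = 1 →
      (A : Matrix (Fin 2) (Fin 2) (ZMod 8)).map
          (ZMod.castHom (show (4:ℕ) ∣ 8 by norm_num) (ZMod 4)) ∈
        ({1, -1, v, -v} : Set (Matrix (Fin 2) (Fin 2) (ZMod 4))) →
      ((A : Matrix (Fin 2) (Fin 2) (ZMod 8)).map
          (ZMod.castHom (show (4:ℕ) ∣ 8 by norm_num) (ZMod 4)) = 1 ∨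
        (A : Matrix (Fin 2) (Fin 2) (ZMod 8)).map
          (ZMod.castHom (show (4:ℕ) ∣ 8 by norm_num) (ZMod 4)) = -1)) := by
  subst hv
  refine ⟨⟨S, Snormal, fun A => Iff.rfl⟩, ?_, ?_⟩
  · -- part (ii)
    intro r
    have hr : (r : ZMod 8) = 1 ∨ (r : ZMod 8) = 3 ∨ (r : ZMod 8) = 5 ∨ (r : ZMod 8) = 7 := by
      revert r; decide
    rcases hr with h | h | h | h
    · exact ⟨1, by rw [h]; decide, by
        simp only [Set.mem_insert_iff, Set.mem_singleton_iff]; left; decide⟩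
    · refine ⟨⟨!![5,2;2,3], !![1,2;2,7], by decide, by decide⟩, by rw [h]; decide, ?_⟩
      simp only [Set.mem_insert_iff, Set.mem_singleton_iff]
      right; right; left; decide
    · refine ⟨⟨!![1,0;0,5], !![1,0;0,5], by decide, by decide⟩, by rw [h]; decide, ?_⟩
      simp only [Set.mem_insert_iff, Set.mem_singleton_iff]
      left; decide
    · refine ⟨⟨!![1,2;2,3], !![5,2;2,7], by decide, by decide⟩, by rw [h]; decide, ?_⟩
      simp only [Set.mem_insert_iff, Set.mem_singleton_iff]
      right; right; left; decide
  · -- part (iii)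
    intro A hdet hmem
    have hd : ((A : Matrix (Fin 2) (Fin 2) (ZMod 8)).map
        (ZMod.castHom (show (4:ℕ) ∣ 8 by norm_num) (ZMod 4))).det = 1 := by
      rw [← RingHom.mapMatrix_apply, ← RingHom.map_det, hdet, map_one]
    simp only [Set.mem_insert_iff, Set.mem_singleton_iff] at hmem
    rcases hmem with h | h | h | h
    · exact Or.inl h
    · exact Or.inr h
    · rw [h] at hd; exact absurd hd (by decide)
    · rw [h] at hd; exact absurd hd (by decide)
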